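/- Let A, B be bounded positive operators on a complex Hilbert space H. Then A ⊥ B if and only if for every x ∈ H there exists a sequence (xₙ) in H such that ⟨Axₙ, xₙ⟩ → 0 and ⟨B(x−xₙ), x−xₙ⟩ → 0. -/

import Mathlib

open Filter

local notation "⟪" x ", " y "⟫" => @inner ℂ _ _ x y

variable {H : Type*} [NormedAddCommGroup H] [InnerProductSpace ℂ H] [CompleteSpace H]

/-- The quadratic-form order: `A ≤ B` iff `⟨Ax, x⟩ ≤ ⟨Bx, x⟩` for all `x`. -/
def QuadLE (A B : H →L[ℂ] H) : Prop :=
  ∀ x : H, (⟪A x, x⟫).re ≤ (⟪B x, x⟫).re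

/-- `B` is absolutely continuous with respect to `A` (`B ≪ A`): for every sequence `(xₙ)`,
if `⟨Axₙ, xₙ⟩ → 0` and `⟨B(xₙ−xₘ), xₙ−xₘ⟩ → 0` as `n, m → ∞`, then `⟨Bxₙ, xₙ⟩ → 0`. -/
def AbsCont (B A : H →L[ℂ] H) : Prop :=
  ∀ x : ℕ → H,
    Tendsto (fun n => (⟪A (x n), x n⟫).re) atTop (nhds 0) →
    (∀ ε > (0 : ℝ), ∃ N : ℕ, ∀ n ≥ N, ∀ m ≥ N,
      (⟪B (x n - x m), x n - x m⟫).re < ε) →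
    Tendsto (fun n => (⟪B (x n), x n⟫).re) atTop (nhds 0)

/-- `A` and `B` are mutually singular (`A ⊥ B`): the only bounded positive operator `C` with
`C ≤ A` and `C ≤ B` is `C = 0`. -/
def MutSing (A B : H →L[ℂ] H) : Prop :=
  ∀ C : H →L[ℂ] H, C.IsPositive → QuadLE C A → QuadLE C B → C = 0

namespace MutSingAux

open ContinuousLinearMap

lemma pos_re {T : H →L[ℂ] H} (hT : T.IsPositive) (x : H) : 0 ≤ (⟪T x, x⟫).re := by
  have := hT.re_inner_nonneg_left x
  rwa [RCLike.re_to_complex] at this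

lemma inner_symm {S : H →L[ℂ] H} (hS : IsSelfAdjoint S) (a b : H) :
    (⟪S a, b⟫ : ℂ) = ⟪a, S b⟫ := by
  nth_rewrite 1 [← hS.adjoint_eq]
  exact adjoint_inner_left S b a

lemma sa_re_symm {S : H →L[ℂ] H} (hS : IsSelfAdjoint S) (a b : H) :
    (⟪S a, b⟫).re = (⟪S b, a⟫).re := by
  have h : (⟪S b, a⟫ : ℂ) = (starRingEnd ℂ) (⟪S a, b⟫ : ℂ) := by
    rw [inner_symm hS b a, ← inner_conj_symm]
  rw [h, Complex.conj_re]

lemma expand_sub {S : H →L[ℂ] H} (hS : IsSelfAdjoint S) (a b : H) :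
    (⟪S (a - b), a - b⟫).re
      = (⟪S a, a⟫).re - 2 * (⟪S a, b⟫).re + (⟪S b, b⟫).re := by
  have h := sa_re_symm hS a b
  simp only [map_sub, inner_sub_left, inner_sub_right, Complex.sub_re]
  linarith

lemma pos_cauchy_schwarz {D : H →L[ℂ] H} (hD : D.IsPositive) (x y : H) :
    ‖(⟪D x, y⟫ : ℂ)‖ ^ 2 ≤ (⟪D x, x⟫).re * (⟪D y, y⟫).re := by
  letI c : PreInnerProductSpace.Core ℂ H :=
    { inner := fun u v => ⟪u, D v⟫
      conj_inner_symm := fun u v => by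
        show (starRingEnd ℂ) (⟪v, D u⟫ : ℂ) = ⟪u, D v⟫
        rw [← inner_symm hD.isSelfAdjoint v u, ← inner_conj_symm]
        exact Complex.conj_conj _
      re_inner_nonneg := fun u => by
        show 0 ≤ RCLike.re (⟪u, D u⟫ : ℂ)
        rw [RCLike.re_to_complex, ← inner_symm hD.isSelfAdjoint]
        exact pos_re hD u
      add_left := fun u v w => inner_add_left _ _ _
      smul_left := fun u v r => inner_smul_left _ _ _ }
  have h := @InnerProductSpace.Core.inner_mul_inner_self_le ℂ H _ _ _ c x y
  have e1 : (c.inner x y : ℂ) = ⟪D x, y⟫ := (inner_symm hD.isSelfAdjoint x y).symm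
  have e2 : (c.inner y x : ℂ) = ⟪D y, x⟫ := (inner_symm hD.isSelfAdjoint y x).symm
  have e3 : ‖(⟪D y, x⟫ : ℂ)‖ = ‖(⟪D x, y⟫ : ℂ)‖ := by
    have : (⟪D y, x⟫ : ℂ) = (starRingEnd ℂ) (⟪D x, y⟫ : ℂ) := by
      rw [inner_symm hD.isSelfAdjoint y x, ← inner_conj_symm]
    rw [this, RCLike.norm_conj]
  have e4 : RCLike.re (c.inner x x) = (⟪D x, x⟫).re := by
    show RCLike.re (⟪x, D x⟫ : ℂ) = _
    rw [RCLike.re_to_complex, ← inner_symm hD.isSelfAdjoint]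
  have e5 : RCLike.re (c.inner y y) = (⟪D y, y⟫).re := by
    show RCLike.re (⟪y, D y⟫ : ℂ) = _
    rw [RCLike.re_to_complex, ← inner_symm hD.isSelfAdjoint]
  rw [e1, e2, e3, e4, e5] at h
  calc ‖(⟪D x, y⟫ : ℂ)‖ ^ 2 = ‖(⟪D x, y⟫ : ℂ)‖ * ‖(⟪D x, y⟫ : ℂ)‖ := sq (‖(⟪D x, y⟫ : ℂ)‖) ▸ by ring
    _ ≤ _ := h

lemma norm_sq_le_of_pos {D : H →L[ℂ] H} (hD : D.IsPositive) {M : ℝ} (hM : 0 ≤ M)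
    (hb : ∀ w, (⟪D w, w⟫).re ≤ M * ‖w‖ ^ 2) (z : H) :
    ‖D z‖ ^ 2 ≤ M * (⟪D z, z⟫).re := by
  rcases eq_or_ne (D z) 0 with h0 | h0
  · rw [h0]
    simpa using mul_nonneg hM (pos_re hD z)
  · have hcs := pos_cauchy_schwarz hD z (D z)
    have hinner : (⟪D z, D z⟫ : ℂ) = ((‖D z‖ ^ 2 : ℝ) : ℂ) := by
      exact_mod_cast inner_self_eq_norm_sq_to_K (𝕜 := ℂ) (D z)
    rw [hinner] at hcs
    have hpos : (0:ℝ) < ‖D z‖ ^ 2 := pow_pos (norm_pos_iff.mpr h0) 2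
    have hr := pos_re hD z
    have hcs' : (‖D z‖ ^ 2) ^ 2 ≤ (⟪D z, z⟫).re * (M * ‖D z‖ ^ 2) := by
      calc (‖D z‖ ^ 2) ^ 2 = ‖((‖D z‖ ^ 2 : ℝ) : ℂ)‖ ^ 2 := by
            rw [Complex.norm_real, Real.norm_eq_abs, abs_of_nonneg (le_of_lt hpos)]
        _ ≤ (⟪D z, z⟫).re * (⟪D (D z), D z⟫).re := hcs
        _ ≤ (⟪D z, z⟫).re * (M * ‖D z‖ ^ 2) :=
            mul_le_mul_of_nonneg_left (hb (D z)) hr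
    nlinarith [hpos]


noncomputable section

def eps (n : ℕ) : ℝ := ((n : ℝ) + 1)⁻¹

lemma eps_pos (n : ℕ) : 0 < eps n := by unfold eps; positivity

lemma eps_le_one (n : ℕ) : eps n ≤ 1 := by
  rw [eps]
  rw [inv_le_one_iff₀]
  right; simp [Nat.cast_nonneg]

lemma eps_antitone : Antitone eps := fun n m h => by
  apply inv_anti₀ (by positivity)
  have : (n : ℝ) ≤ m := Nat.cast_le.mpr h
  linarith

lemma eps_tendsto : Tendsto eps atTop (nhds 0) := by
  have := tendsto_one_div_add_atTop_nhds_zero_nat (𝕜 := ℝ)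
  exact this.congr (fun n => by simp [eps])

variable (B : H →L[ℂ] H)

def Bop (n : ℕ) : H →L[ℂ] H := B + ((eps n : ℝ) : ℂ) • 1

variable {B} {A : H →L[ℂ] H}

lemma bop_sa (hB : B.IsPositive) (n : ℕ) : IsSelfAdjoint (Bop B n) := by
  unfold Bop
  rw [IsSelfAdjoint, star_add, hB.isSelfAdjoint.star_eq, star_smul, star_one, Complex.star_def,
    Complex.conj_ofReal]

lemma bop_apply (n : ℕ) (x : H) : Bop B n x = B x + ((eps n : ℝ) : ℂ) • x := by
  simp [Bop]

lemma bop_form (n : ℕ) (x : H) :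
    (⟪Bop B n x, x⟫).re = (⟪B x, x⟫).re + eps n * ‖x‖ ^ 2 := by
  rw [bop_apply, inner_add_left, Complex.add_re, inner_smul_left, Complex.conj_ofReal]
  congr 1
  rw [Complex.re_ofReal_mul]
  congr 1
  have := inner_self_eq_norm_sq (𝕜 := ℂ) x
  rwa [RCLike.re_to_complex] at this

lemma bop_pos (hB : B.IsPositive) (n : ℕ) : (Bop B n).IsPositive := by
  refine ⟨(bop_sa hB n).isSymmetric, fun x => ?_⟩
  show 0 ≤ RCLike.re (⟪Bop B n x, x⟫ : ℂ)
  rw [RCLike.re_to_complex, bop_form]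
  have := pos_re hB x
  have h2 : 0 ≤ eps n * ‖x‖ ^ 2 := mul_nonneg (eps_pos n).le (sq_nonneg _)
  linarith

def Top (A B : H →L[ℂ] H) (n : ℕ) : H →L[ℂ] H := A + Bop B n

lemma top_sa (hA : A.IsPositive) (hB : B.IsPositive) (n : ℕ) :
    IsSelfAdjoint (Top A B n) := hA.isSelfAdjoint.add (bop_sa hB n)

lemma top_pos (hA : A.IsPositive) (hB : B.IsPositive) (n : ℕ) :
    (Top A B n).IsPositive := hA.add (bop_pos hB n)

lemma top_form (n : ℕ) (x : H) :
    (⟪Top A B n x, x⟫).re = (⟪A x, x⟫).re + (⟪B x, x⟫).re + eps n * ‖x‖ ^ 2 := by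
  show (⟪(A + Bop B n) x, x⟫).re = _
  rw [ContinuousLinearMap.add_apply, inner_add_left, Complex.add_re, bop_form]
  ring

lemma top_unit (hA : A.IsPositive) (hB : B.IsPositive) (n : ℕ) : IsUnit (Top A B n) := by
  apply ContinuousLinearMap.isUnit_of_forall_le_norm_inner_map (Top A B n)
    (c := ⟨eps n, (eps_pos n).le⟩) (by exact_mod_cast eps_pos n)
  intro x
  have h1 : (⟪Top A B n x, x⟫).re ≤ ‖(⟪Top A B n x, x⟫ : ℂ)‖ := by
    exact Complex.re_le_norm _
  have h2 := pos_re hA x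
  have h3 := pos_re hB x
  have h4 := top_form (A := A) (B := B) n x
  show ‖x‖ ^ 2 * eps n ≤ _
  nlinarith [h4]

def Rop (hA : A.IsPositive) (hB : B.IsPositive) (n : ℕ) : H →L[ℂ] H :=
  ↑(top_unit hA hB n).unit⁻¹

lemma rop_mul_top (hA : A.IsPositive) (hB : B.IsPositive) (n : ℕ) :
    Rop hA hB n * Top A B n = 1 := by
  have := (top_unit hA hB n).unit.inv_mul
  rwa [IsUnit.unit_spec] at this

lemma top_mul_rop (hA : A.IsPositive) (hB : B.IsPositive) (n : ℕ) :
    Top A B n * Rop hA hB n = 1 := by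
  have := (top_unit hA hB n).unit.mul_inv
  rwa [IsUnit.unit_spec] at this

lemma rop_sa (hA : A.IsPositive) (hB : B.IsPositive) (n : ℕ) :
    IsSelfAdjoint (Rop hA hB n) := by
  have h2 := congrArg star (top_mul_rop hA hB n)
  rw [star_mul, star_one, (top_sa hA hB n).star_eq] at h2
  -- h2 : star (Rop) * Top = 1
  calc star (Rop hA hB n) = star (Rop hA hB n) * (Top A B n * Rop hA hB n) := by
        rw [top_mul_rop, mul_one]
    _ = (star (Rop hA hB n) * Top A B n) * Rop hA hB n := by rw [mul_assoc]
    _ = Rop hA hB n := by rw [h2, one_mul]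

def ystar (hA : A.IsPositive) (hB : B.IsPositive) (n : ℕ) (x : H) : H :=
  Rop hA hB n (Bop B n x)

def Cop (hA : A.IsPositive) (hB : B.IsPositive) (n : ℕ) : H →L[ℂ] H :=
  Bop B n - Bop B n * Rop hA hB n * Bop B n

lemma top_ystar (hA : A.IsPositive) (hB : B.IsPositive) (n : ℕ) (x : H) :
    Top A B n (ystar hA hB n x) = Bop B n x := by
  have := congrArg (fun T => T (Bop B n x)) (top_mul_rop hA hB n)
  simpa [ContinuousLinearMap.mul_apply, ystar] using this

lemma cop_identity (hA : A.IsPositive) (hB : B.IsPositive) (n : ℕ) (x y : H) :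
    (⟪Cop hA hB n x, x⟫).re
      + (⟪Top A B n (y - ystar hA hB n x), y - ystar hA hB n x⟫).re
      = (⟪A y, y⟫).re + (⟪Bop B n (x - y), x - y⟫).re := by
  set b := Bop B n with hb
  set S := Top A B n with hS
  set y' := ystar hA hB n x with hy'
  have hSy' : S y' = b x := top_ystar hA hB n x
  have hSsa := top_sa hA hB n
  have hbsa := bop_sa hB n
  have e1 := expand_sub hSsa y y'
  have e2 := expand_sub hbsa x y
  have e3 : (⟪S y, y'⟫).re = (⟪b x, y⟫).re := by
    rw [sa_re_symm hSsa y y', hSy']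
  have e4 : (⟪S y', y'⟫).re = (⟪b x, y'⟫).re := by rw [hSy']
  have e5 : (⟪S y, y⟫).re = (⟪A y, y⟫).re + (⟪b y, y⟫).re := by
    show (⟪(A + b) y, y⟫).re = _
    rw [ContinuousLinearMap.add_apply, inner_add_left, Complex.add_re]
  have e6 : (⟪Cop hA hB n x, x⟫).re = (⟪b x, x⟫).re - (⟪b x, y'⟫).re := by
    have happ : Cop hA hB n x = b x - b y' := by
      simp [Cop, ContinuousLinearMap.sub_apply, ContinuousLinearMap.mul_apply, hy', ystar, hb]
    rw [happ, inner_sub_left, Complex.sub_re, sa_re_symm hbsa y' x]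
  rw [e1, e3, e4, e5, e6, e2]
  ring

end
noncomputable section

variable {A B : H →L[ℂ] H}

def qf (hA : A.IsPositive) (hB : B.IsPositive) (n : ℕ) (x : H) : ℝ :=
  (⟪Cop hA hB n x, x⟫).re

lemma cop_le (hA : A.IsPositive) (hB : B.IsPositive) (n : ℕ) (x y : H) :
    qf hA hB n x ≤ (⟪A y, y⟫).re + (⟪Bop B n (x - y), x - y⟫).re := by
  have h := cop_identity hA hB n x y
  have h2 := pos_re (top_pos hA hB n) (y - ystar hA hB n x)
  unfold qf
  linarith

lemma cop_eq (hA : A.IsPositive) (hB : B.IsPositive) (n : ℕ) (x : H) :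
    qf hA hB n x = (⟪A (ystar hA hB n x), ystar hA hB n x⟫).re
      + (⟪Bop B n (x - ystar hA hB n x), x - ystar hA hB n x⟫).re := by
  have h := cop_identity hA hB n x (ystar hA hB n x)
  rw [sub_self] at h
  simp only [map_zero, inner_zero_left, Complex.zero_re, add_zero] at h
  exact h

lemma q_nonneg (hA : A.IsPositive) (hB : B.IsPositive) (n : ℕ) (x : H) :
    0 ≤ qf hA hB n x := by
  rw [cop_eq]
  exact add_nonneg (pos_re hA _) (pos_re (bop_pos hB n) _)

lemma q_antitone (hA : A.IsPositive) (hB : B.IsPositive) {n m : ℕ} (h : n ≤ m) (x : H) :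
    qf hA hB m x ≤ qf hA hB n x := by
  set y := ystar hA hB n x
  have h1 := cop_le hA hB m x y
  have h2 := cop_eq hA hB n x
  have h3 := bop_form (B := B) m (x - y)
  have h4 := bop_form (B := B) n (x - y)
  have h5 : eps m ≤ eps n := eps_antitone h
  have h6 : 0 ≤ ‖x - y‖ ^ 2 := sq_nonneg _
  nlinarith

lemma q_le_A (hA : A.IsPositive) (hB : B.IsPositive) (n : ℕ) (x : H) :
    qf hA hB n x ≤ (⟪A x, x⟫).re := by
  have h := cop_le hA hB n x x
  rw [sub_self] at h
  simpa using h

lemma q_le_B (hA : A.IsPositive) (hB : B.IsPositive) (n : ℕ) (x : H) :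
    qf hA hB n x ≤ (⟪B x, x⟫).re + eps n * ‖x‖ ^ 2 := by
  have h := cop_le hA hB n x 0
  rw [sub_zero] at h
  rw [bop_form] at h
  simpa using h

lemma reB_le (x : H) : (⟪B x, x⟫).re ≤ ‖B‖ * ‖x‖ ^ 2 := by
  have h1 : (⟪B x, x⟫).re ≤ ‖(⟪B x, x⟫ : ℂ)‖ := by
    exact Complex.re_le_norm _
  have h2 : ‖(⟪B x, x⟫ : ℂ)‖ ≤ ‖B x‖ * ‖x‖ := norm_inner_le_norm _ _
  have h3 : ‖B x‖ * ‖x‖ ≤ (‖B‖ * ‖x‖) * ‖x‖ :=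
    mul_le_mul_of_nonneg_right (B.le_opNorm x) (norm_nonneg x)
  calc (⟪B x, x⟫).re ≤ ‖B x‖ * ‖x‖ := le_trans h1 h2
    _ ≤ ‖B‖ * ‖x‖ ^ 2 := by rw [sq]; linarith

lemma q_boundM (hA : A.IsPositive) (hB : B.IsPositive) (n : ℕ) (x : H) :
    qf hA hB n x ≤ (‖B‖ + 1) * ‖x‖ ^ 2 := by
  have h1 := q_le_B hA hB n x
  have h2 := reB_le (B := B) x
  have h3 : eps n * ‖x‖ ^ 2 ≤ 1 * ‖x‖ ^ 2 :=
    mul_le_mul_of_nonneg_right (eps_le_one n) (sq_nonneg _)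
  nlinarith

lemma cop_sa (hA : A.IsPositive) (hB : B.IsPositive) (n : ℕ) :
    IsSelfAdjoint (Cop hA hB n) := by
  have hb := (bop_sa hB n).star_eq
  have hr := (rop_sa hA hB n).star_eq
  unfold Cop
  rw [IsSelfAdjoint, star_sub, star_mul, star_mul, hb, hr, mul_assoc]

lemma cop_pos (hA : A.IsPositive) (hB : B.IsPositive) (n : ℕ) :
    (Cop hA hB n).IsPositive := by
  refine ⟨(cop_sa hA hB n).isSymmetric, fun x => ?_⟩
  show 0 ≤ RCLike.re (⟪Cop hA hB n x, x⟫ : ℂ)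
  rw [RCLike.re_to_complex]
  exact q_nonneg hA hB n x

lemma diff_pos (hA : A.IsPositive) (hB : B.IsPositive) {n m : ℕ} (h : n ≤ m) :
    (Cop hA hB n - Cop hA hB m).IsPositive := by
  refine ⟨((cop_sa hA hB n).sub (cop_sa hA hB m)).isSymmetric, fun z => ?_⟩
  show 0 ≤ RCLike.re (⟪(Cop hA hB n - Cop hA hB m) z, z⟫ : ℂ)
  rw [RCLike.re_to_complex, ContinuousLinearMap.sub_apply, inner_sub_left, Complex.sub_re]
  have := q_antitone hA hB h z
  unfold qf at this
  linarith

lemma diff_re (hA : A.IsPositive) (hB : B.IsPositive) (n m : ℕ) (z : H) :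
    (⟪(Cop hA hB n - Cop hA hB m) z, z⟫).re = qf hA hB n z - qf hA hB m z := by
  rw [ContinuousLinearMap.sub_apply, inner_sub_left, Complex.sub_re]; rfl

lemma norm_diff (hA : A.IsPositive) (hB : B.IsPositive) {n m : ℕ} (h : n ≤ m) (z : H) :
    ‖Cop hA hB n z - Cop hA hB m z‖ ^ 2 ≤ (‖B‖ + 1) * (qf hA hB n z - qf hA hB m z) := by
  have hM0 : (0:ℝ) ≤ ‖B‖ + 1 := by positivity
  have hb : ∀ w, (⟪(Cop hA hB n - Cop hA hB m) w, w⟫).re ≤ (‖B‖ + 1) * ‖w‖ ^ 2 := by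
    intro w
    rw [diff_re]
    have h1 := q_boundM hA hB n w
    have h2 := q_nonneg hA hB m w
    linarith
  have := norm_sq_le_of_pos (diff_pos hA hB h) hM0 hb z
  rw [diff_re] at this
  simpa [ContinuousLinearMap.sub_apply] using this

lemma norm_single (hA : A.IsPositive) (hB : B.IsPositive) (n : ℕ) (z : H) :
    ‖Cop hA hB n z‖ ≤ (‖B‖ + 1) * ‖z‖ := by
  have hM0 : (0:ℝ) ≤ ‖B‖ + 1 := by positivity
  have hb : ∀ w, (⟪Cop hA hB n w, w⟫).re ≤ (‖B‖ + 1) * ‖w‖ ^ 2 := fun w => q_boundM hA hB n w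
  have h1 := norm_sq_le_of_pos (cop_pos hA hB n) hM0 hb z
  have h2 : (⟪Cop hA hB n z, z⟫).re ≤ (‖B‖ + 1) * ‖z‖ ^ 2 := q_boundM hA hB n z
  nlinarith [norm_nonneg (Cop hA hB n z), norm_nonneg z, mul_nonneg hM0 (norm_nonneg z)]

def qlim (hA : A.IsPositive) (hB : B.IsPositive) (z : H) : ℝ := ⨅ n, qf hA hB n z

lemma q_bddBelow (hA : A.IsPositive) (hB : B.IsPositive) (z : H) :
    BddBelow (Set.range fun n => qf hA hB n z) := by
  refine ⟨0, ?_⟩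
  rintro r ⟨n, rfl⟩
  exact q_nonneg hA hB n z

lemma tendsto_q (hA : A.IsPositive) (hB : B.IsPositive) (z : H) :
    Tendsto (fun n => qf hA hB n z) atTop (nhds (qlim hA hB z)) :=
  tendsto_atTop_ciInf (fun n m h => q_antitone hA hB h z) (q_bddBelow hA hB z)

lemma qlim_le (hA : A.IsPositive) (hB : B.IsPositive) (n : ℕ) (z : H) :
    qlim hA hB z ≤ qf hA hB n z :=
  ciInf_le (q_bddBelow hA hB z) n

lemma qlim_nonneg (hA : A.IsPositive) (hB : B.IsPositive) (z : H) :
    0 ≤ qlim hA hB z :=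
  le_ciInf (fun n => q_nonneg hA hB n z)

lemma cauchy_cop (hA : A.IsPositive) (hB : B.IsPositive) (z : H) :
    CauchySeq (fun n => Cop hA hB n z) := by
  apply cauchySeq_of_le_tendsto_0
    (b := fun N => Real.sqrt ((‖B‖ + 1) * (qf hA hB N z - qlim hA hB z)))
  · intro n m N hn hm
    have key : ∀ i j : ℕ, N ≤ i → i ≤ j →
        ‖Cop hA hB i z - Cop hA hB j z‖ ≤
          Real.sqrt ((‖B‖ + 1) * (qf hA hB N z - qlim hA hB z)) := by
      intro i j hi hij
      have h1 := norm_diff hA hB hij z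
      have h2 : qf hA hB i z ≤ qf hA hB N z := q_antitone hA hB hi z
      have h3 : qlim hA hB z ≤ qf hA hB j z := qlim_le hA hB j z
      have hM0 : (0:ℝ) ≤ ‖B‖ + 1 := by positivity
      have h4 : ‖Cop hA hB i z - Cop hA hB j z‖ ^ 2 ≤
          (‖B‖ + 1) * (qf hA hB N z - qlim hA hB z) := by nlinarith
      calc ‖Cop hA hB i z - Cop hA hB j z‖
          = Real.sqrt (‖Cop hA hB i z - Cop hA hB j z‖ ^ 2) :=
            (Real.sqrt_sq (norm_nonneg _)).symm
        _ ≤ _ := Real.sqrt_le_sqrt h4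
    rw [dist_eq_norm]
    rcases le_total n m with hnm | hnm
    · exact key n m hn hnm
    · rw [norm_sub_rev]
      exact key m n hm hnm
  · have h : Tendsto (fun N => (‖B‖ + 1) * (qf hA hB N z - qlim hA hB z)) atTop
        (nhds ((‖B‖ + 1) * (qlim hA hB z - qlim hA hB z))) :=
      ((tendsto_q hA hB z).sub tendsto_const_nhds).const_mul _
    rw [sub_self, mul_zero] at h
    have := (Real.continuous_sqrt.tendsto 0).comp h
    rwa [Real.sqrt_zero] at this

def Cfun (hA : A.IsPositive) (hB : B.IsPositive) (z : H) : H :=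
  (cauchySeq_tendsto_of_complete (cauchy_cop hA hB z)).choose

lemma tendsto_cop (hA : A.IsPositive) (hB : B.IsPositive) (z : H) :
    Tendsto (fun n => Cop hA hB n z) atTop (nhds (Cfun hA hB z)) :=
  (cauchySeq_tendsto_of_complete (cauchy_cop hA hB z)).choose_spec

def Clm (hA : A.IsPositive) (hB : B.IsPositive) : H →L[ℂ] H :=
  LinearMap.mkContinuous
    { toFun := Cfun hA hB
      map_add' := fun z w => tendsto_nhds_unique (tendsto_cop hA hB (z + w))
        (by simpa only [map_add] using ((tendsto_cop hA hB z).add (tendsto_cop hA hB w)))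
      map_smul' := fun c z => tendsto_nhds_unique (tendsto_cop hA hB (c • z))
        (by simpa only [map_smul, RingHom.id_apply] using ((tendsto_cop hA hB z).const_smul c)) }
    (‖B‖ + 1)
    (fun z => le_of_tendsto' ((tendsto_cop hA hB z).norm)
      (fun n => norm_single hA hB n z) |>.trans (le_refl _))

lemma clm_apply (hA : A.IsPositive) (hB : B.IsPositive) (z : H) :
    Clm hA hB z = Cfun hA hB z := rfl

lemma clm_inner (hA : A.IsPositive) (hB : B.IsPositive) (z w : H) :
    Tendsto (fun n => (⟪Cop hA hB n z, w⟫ : ℂ)) atTop (nhds (⟪Clm hA hB z, w⟫ : ℂ)) := by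
  rw [clm_apply]
  exact (tendsto_cop hA hB z).inner tendsto_const_nhds

lemma clm_form (hA : A.IsPositive) (hB : B.IsPositive) (z : H) :
    (⟪Clm hA hB z, z⟫).re = qlim hA hB z := by
  have h1 : Tendsto (fun n => (⟪Cop hA hB n z, z⟫).re) atTop
      (nhds ((⟪Clm hA hB z, z⟫).re)) :=
    (Complex.continuous_re.tendsto _).comp (clm_inner hA hB z z)
  exact tendsto_nhds_unique h1 (tendsto_q hA hB z)

lemma clm_pos (hA : A.IsPositive) (hB : B.IsPositive) : (Clm hA hB).IsPositive := by
  constructor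
  · show (Clm hA hB : H →ₗ[ℂ] H).IsSymmetric
    intro z w
    have h1 : Tendsto (fun n => (⟪Cop hA hB n z, w⟫ : ℂ)) atTop
        (nhds (⟪z, Clm hA hB w⟫ : ℂ)) := by
      have e : (fun n => (⟪Cop hA hB n z, w⟫ : ℂ)) = fun n => (⟪z, Cop hA hB n w⟫ : ℂ) := by
        funext n
        exact inner_symm (cop_sa hA hB n) z w
      rw [e, clm_apply]
      exact tendsto_const_nhds.inner (tendsto_cop hA hB w)
    have := tendsto_nhds_unique (clm_inner hA hB z w) h1
    simpa using this
  · intro z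
    show 0 ≤ RCLike.re (⟪Clm hA hB z, z⟫ : ℂ)
    rw [RCLike.re_to_complex, clm_form]
    exact qlim_nonneg hA hB z

lemma clm_le_A (hA : A.IsPositive) (hB : B.IsPositive) (z : H) :
    (⟪Clm hA hB z, z⟫).re ≤ (⟪A z, z⟫).re := by
  rw [clm_form]
  exact (qlim_le hA hB 0 z).trans (q_le_A hA hB 0 z)

lemma clm_le_B (hA : A.IsPositive) (hB : B.IsPositive) (z : H) :
    (⟪Clm hA hB z, z⟫).re ≤ (⟪B z, z⟫).re := by
  rw [clm_form]
  have h : Tendsto (fun n => (⟪B z, z⟫).re + eps n * ‖z‖ ^ 2) atTop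
      (nhds ((⟪B z, z⟫).re + 0)) :=
    tendsto_const_nhds.add (by simpa using eps_tendsto.mul_const (‖z‖ ^ 2))
  rw [add_zero] at h
  exact ge_of_tendsto' h (fun n => (qlim_le hA hB n z).trans (q_le_B hA hB n z))

end

end MutSingAux


lemma MutSingAux.expand_add {S : H →L[ℂ] H} (hS : IsSelfAdjoint S) (a b : H) :
    (⟪S (a + b), a + b⟫).re
      = (⟪S a, a⟫).re + 2 * (⟪S a, b⟫).re + (⟪S b, b⟫).re := by
  have h := MutSingAux.sa_re_symm hS a b
  simp only [map_add, inner_add_left, inner_add_right, Complex.add_re]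
  linarith

/-- **Metric characterization of singularity** (Theorem 6.1 (i) ⇔ (vii), Hilbert space case).
`A ⊥ B` iff for every `x` there is a sequence `(xₙ)` with `⟨A xₙ, xₙ⟩ → 0` and
`⟨B(x − xₙ), x − xₙ⟩ → 0`. -/
theorem stmt_14 (A B : H →L[ℂ] H) (hA : A.IsPositive) (hB : B.IsPositive) :
    MutSing A B ↔
      ∀ x : H, ∃ s : ℕ → H,
        Tendsto (fun n => (⟪A (s n), s n⟫).re) atTop (nhds 0) ∧
        Tendsto (fun n => (⟪B (x - s n), x - s n⟫).re) atTop (nhds 0) := by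
  constructor
  · intro hM x
    have hC0 : MutSingAux.Clm hA hB = 0 :=
      hM _ (MutSingAux.clm_pos hA hB) (fun z => MutSingAux.clm_le_A hA hB z)
        (fun z => MutSingAux.clm_le_B hA hB z)
    have hq0 : MutSingAux.qlim hA hB x = 0 := by
      rw [← MutSingAux.clm_form hA hB x, hC0]
      simp
    have htend : Tendsto (fun n => MutSingAux.qf hA hB n x) atTop (nhds 0) := by
      rw [← hq0]; exact MutSingAux.tendsto_q hA hB x
    have hex : ∀ n : ℕ, ∃ y : H,
        (⟪A y, y⟫).re + (⟪B (x - y), x - y⟫).re < MutSingAux.eps n := by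
      intro n
      obtain ⟨m, hm⟩ := (htend.eventually (gt_mem_nhds (MutSingAux.eps_pos n))).exists
      refine ⟨MutSingAux.ystar hA hB m x, ?_⟩
      have h2 := MutSingAux.cop_eq hA hB m x
      have h3 := MutSingAux.bop_form (B := B) m (x - MutSingAux.ystar hA hB m x)
      have h4 : 0 ≤ MutSingAux.eps m * ‖x - MutSingAux.ystar hA hB m x‖ ^ 2 :=
        mul_nonneg (MutSingAux.eps_pos m).le (sq_nonneg _)
      linarith
    choose s hs using hex
    refine ⟨s, ?_, ?_⟩
    · refine squeeze_zero (fun n => MutSingAux.pos_re hA _) (fun n => ?_)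
        MutSingAux.eps_tendsto
      have h1 := hs n
      have h2 := MutSingAux.pos_re hB (x - s n)
      linarith
    · refine squeeze_zero (fun n => MutSingAux.pos_re hB _) (fun n => ?_)
        MutSingAux.eps_tendsto
      have h1 := hs n
      have h2 := MutSingAux.pos_re hA (s n)
      linarith
  · intro hseq C hC hCA hCB
    have h0 : ∀ x : H, (⟪C x, x⟫).re = 0 := by
      intro x
      obtain ⟨s, hsA, hsB⟩ := hseq x
      have key : ∀ n, (⟪C x, x⟫).re ≤ (⟪A (s n), s n⟫).re
          + 2 * Real.sqrt ((⟪A (s n), s n⟫).re * (⟪B (x - s n), x - s n⟫).re)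
          + (⟪B (x - s n), x - s n⟫).re := by
        intro n
        set u := s n with hu
        set v := x - s n with hv
        have hx : u + v = x := by rw [hu, hv]; abel
        have hexp := MutSingAux.expand_add hC.isSelfAdjoint u v
        rw [hx] at hexp
        have hcs := MutSingAux.pos_cauchy_schwarz hC u v
        have hCu : (⟪C u, u⟫).re ≤ (⟪A u, u⟫).re := hCA u
        have hCv : (⟪C v, v⟫).re ≤ (⟪B v, v⟫).re := hCB v
        have hCu0 := MutSingAux.pos_re hC u
        have hCv0 := MutSingAux.pos_re hC v
        have hAu0 := MutSingAux.pos_re hA u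
        have hBv0 := MutSingAux.pos_re hB v
        have hmid : (⟪C u, v⟫).re ≤ Real.sqrt ((⟪A u, u⟫).re * (⟪B v, v⟫).re) := by
          have h1 : (⟪C u, v⟫).re ≤ ‖(⟪C u, v⟫ : ℂ)‖ := by
            exact Complex.re_le_norm _
          have h2 : ‖(⟪C u, v⟫ : ℂ)‖ ≤ Real.sqrt ((⟪C u, u⟫).re * (⟪C v, v⟫).re) := by
            rw [← Real.sqrt_sq (norm_nonneg ((⟪C u, v⟫ : ℂ)))]
            exact Real.sqrt_le_sqrt hcs
          have h3 : Real.sqrt ((⟪C u, u⟫).re * (⟪C v, v⟫).re)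
              ≤ Real.sqrt ((⟪A u, u⟫).re * (⟪B v, v⟫).re) :=
            Real.sqrt_le_sqrt (mul_le_mul hCu hCv hCv0 hAu0)
          linarith
        linarith
      have hg : Tendsto (fun n => (⟪A (s n), s n⟫).re
          + 2 * Real.sqrt ((⟪A (s n), s n⟫).re * (⟪B (x - s n), x - s n⟫).re)
          + (⟪B (x - s n), x - s n⟫).re) atTop (nhds 0) := by
      
        have hmul : Tendsto (fun n => (⟪A (s n), s n⟫).re * (⟪B (x - s n), x - s n⟫).re)
            atTop (nhds 0) := by simpa using hsA.mul hsB
        have hsqrt : Tendsto (fun n =>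
            Real.sqrt ((⟪A (s n), s n⟫).re * (⟪B (x - s n), x - s n⟫).re)) atTop (nhds 0) := by
          have := (Real.continuous_sqrt.tendsto 0).comp hmul
          rwa [Real.sqrt_zero] at this
        have := (hsA.add (hsqrt.const_mul 2)).add hsB
        simpa using this
      have hle : (⟪C x, x⟫).re ≤ 0 := ge_of_tendsto' hg key
      exact le_antisymm hle (MutSingAux.pos_re hC x)
    have h1 : (0 : H →L[ℂ] H) ≤ C := (ContinuousLinearMap.nonneg_iff_isPositive C).mpr hC
    have h2 : C ≤ 0 := by
      rw [ContinuousLinearMap.le_def]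
      refine ⟨?_, fun z => ?_⟩
      · rw [zero_sub]
        exact hC.isSelfAdjoint.neg.isSymmetric
      · show 0 ≤ RCLike.re (⟪(0 - C) z, z⟫ : ℂ)
        rw [RCLike.re_to_complex, zero_sub, ContinuousLinearMap.neg_apply, inner_neg_left,
          Complex.neg_re, h0 z, neg_zero]
    exact le_antisymm h2 h1
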